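/- Let g be a probability density on ℝ with continuous cdf G, let λ ≠ 0, and let f(x) = (λ/(1 − e^{−λ})) g(x) e^{−λG(x)}. Let z be any probability density on ℝ, absolutely continuous with respect to f (i.e., z = 0 a.e. where f = 0), such that z log z and z log f are integrable and z satisfies the two constraints ∫ z(x) log g(x) dx = ∫ f(x) log g(x) dx and ∫ z(x) G(x) dx = 1/λ − 1/(e^λ − 1). Then −∫ z log z dx ≤ −∫ f log f dx, with equality if and only if z = f Lebesgue-almost everywhere. That is, f is the unique maximum Shannon entropy density under constraints C1 and C2. -/

import Mathlib

open Real Set MeasureTheory Filter Topology intervalIntegral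
open scoped ENNReal NNReal


lemma gibbs_pointwise {a b : ℝ} (ha : 0 ≤ a) (hb : 0 ≤ b) (hab : b = 0 → a = 0) :
    a * Real.log b - a * Real.log a ≤ b - a ∧
    (a * Real.log b - a * Real.log a = b - a → a = b) := by
  rcases eq_or_lt_of_le ha with h0 | h0
  · constructor
    · simp [← h0]; exact hb
    · intro h; simp [← h0] at h ⊢; linarith
  · have hb0 : 0 < b := by
      rcases eq_or_lt_of_le hb with h | h
      · exact absurd (hab h.symm) (ne_of_gt h0)
      · exact h
    have hba : 0 < b / a := div_pos hb0 h0
    have key : a * Real.log b - a * Real.log a = a * Real.log (b / a) := by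
      rw [Real.log_div (ne_of_gt hb0) (ne_of_gt h0)]; ring
    constructor
    · rw [key]
      have := Real.log_le_sub_one_of_pos hba
      calc a * Real.log (b / a) ≤ a * (b / a - 1) := by
            exact mul_le_mul_of_nonneg_left this ha
        _ = b - a := by field_simp
    · intro h
      by_contra hne
      have h1 : b / a ≠ 1 := by
        intro hc; exact hne ((div_eq_one_iff_eq (ne_of_gt h0)).mp hc).symm
      have := Real.log_lt_sub_one_of_pos hba h1
      have : a * Real.log (b / a) < a * (b / a - 1) := by
        exact mul_lt_mul_of_pos_left this h0
      rw [key] at h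
      have : a * (b / a - 1) = b - a := by field_simp
      linarith [mul_lt_mul_of_pos_left (Real.log_lt_sub_one_of_pos hba h1) h0, h, this]

lemma gibbs {f z : ℝ → ℝ} (hf0 : ∀ x, 0 ≤ f x) (hfi : Integrable f) (hf1 : ∫ x, f x = 1)
    (hz0 : ∀ x, 0 ≤ z x) (hzi : Integrable z) (hz1 : ∫ x, z x = 1)
    (hzac : ∀ᵐ x, f x = 0 → z x = 0)
    (hzz : Integrable fun x => z x * Real.log (z x))
    (hzf : Integrable fun x => z x * Real.log (f x)) :
    (∫ x, z x * Real.log (f x)) ≤ (∫ x, z x * Real.log (z x)) ∧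
    ((∫ x, z x * Real.log (f x)) = (∫ x, z x * Real.log (z x)) → z =ᵐ[volume] f) := by
  set φ : ℝ → ℝ := fun x => (f x - z x) - (z x * Real.log (f x) - z x * Real.log (z x)) with hφ
  have hφi : Integrable φ := (hfi.sub hzi).sub (hzf.sub hzz)
  have hφ0 : 0 ≤ᵐ[volume] φ := by
    filter_upwards [hzac] with x hx
    have := (gibbs_pointwise (hz0 x) (hf0 x) hx).1
    simp only [hφ, Pi.zero_apply]; linarith
  have hint : ∫ x, φ x = (∫ x, z x * Real.log (z x)) - (∫ x, z x * Real.log (f x)) := by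
    have : ∫ x, φ x = (∫ x, (f x - z x)) - ∫ x, (z x * Real.log (f x) - z x * Real.log (z x)) :=
      integral_sub (hfi.sub hzi) (hzf.sub hzz)
    rw [this, integral_sub hfi hzi, integral_sub hzf hzz, hf1, hz1]
    ring
  constructor
  · have h0 : 0 ≤ ∫ x, φ x := integral_nonneg_of_ae hφ0
    linarith [hint, h0]
  · intro heq
    have h0 : ∫ x, φ x = 0 := by rw [hint, heq]; ring
    have hae : φ =ᵐ[volume] 0 := (integral_eq_zero_iff_of_nonneg_ae hφ0 hφi).mp h0
    filter_upwards [hae, hzac] with x hx hx2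
    have := (gibbs_pointwise (hz0 x) (hf0 x) hx2).2
    simp only [hφ, Pi.zero_apply] at hx
    exact this (by linarith)

lemma cdf_transform (g : ℝ → ℝ) (hg0 : ∀ x, 0 ≤ g x) (hgint : Integrable g) (hg1 : ∫ x, g x = 1)
    (G : ℝ → ℝ) (hG : ∀ x, G x = ∫ t in Iio x, g t) (φ : ℝ → ℝ) (hφ : Continuous φ) :
    ∫ x, φ (G x) * g x = ∫ u in Ioc (0:ℝ) 1, φ u := by
  have hGmono : Monotone G := by
    intro x y hxy
    rw [hG, hG]
    exact setIntegral_mono_set hgint.integrableOn (ae_of_all _ hg0)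
      (HasSubset.Subset.eventuallyLE (Iio_subset_Iio hxy))
  have hGnonneg : ∀ x, 0 ≤ G x := fun x => by
    rw [hG]; exact setIntegral_nonneg measurableSet_Iio fun t _ => hg0 t
  have hGle1 : ∀ x, G x ≤ 1 := fun x => by
    rw [hG, ← hg1]; exact setIntegral_le_integral hgint (ae_of_all _ hg0)
  have hGeq : ∀ x, G x = G 0 + ∫ t in (0:ℝ)..x, g t := by
    intro x
    rw [hG x, hG 0, ← integral_Iic_eq_integral_Iio, ← integral_Iic_eq_integral_Iio,
      ← intervalIntegral.integral_Iic_sub_Iic hgint.integrableOn hgint.integrableOn]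
    ring
  have hGcont : Continuous G := by
    rw [funext hGeq]
    exact continuous_const.add
      (intervalIntegral.continuous_primitive (fun a b => hgint.intervalIntegrable) 0)
  have hGmeas : Measurable G := hGmono.measurable
  have hGtop : Tendsto G atTop (𝓝 1) := by
    have h := tendsto_setIntegral_of_monotone (f := g) (μ := volume)
      (s := fun x : ℝ => Iio x) (fun x => measurableSet_Iio)
      (fun x y hxy => Iio_subset_Iio hxy) (by rw [iUnion_Iio]; exact hgint.integrableOn)
    rw [iUnion_Iio] at h
    simp only [Measure.restrict_univ] at h
    rw [hg1] at h
    exact h.congr fun x => (hG x).symm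
  have hGbot : Tendsto G atBot (𝓝 0) := by
    have h := tendsto_setIntegral_of_antitone (f := g) (μ := volume)
      (s := fun x : ℝ => Iio (-x)) (fun x => measurableSet_Iio)
      (fun x y hxy => Iio_subset_Iio (neg_le_neg hxy)) ⟨0, hgint.integrableOn⟩
    have hempty : (⋂ x : ℝ, Iio (-x)) = ∅ := by
      apply eq_empty_iff_forall_notMem.mpr
      intro t ht
      have := mem_iInter.mp ht (-(t - 1))
      simp at this
      linarith
    rw [hempty] at h
    simp only [Measure.restrict_empty, integral_zero_measure] at h
    have h2 := h.comp tendsto_neg_atBot_atTop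
    have : (fun x : ℝ => ∫ t in Iio (-(-x)), g t) = G := by
      funext x; rw [neg_neg, hG]
    exact this ▸ h2
  set ν : Measure ℝ := volume.withDensity (fun x => ENNReal.ofReal (g x)) with hν
  have hν_meas : ∀ s : Set ℝ, MeasurableSet s → ν s = ENNReal.ofReal (∫ x in s, g x) := by
    intro s hs
    rw [hν, withDensity_apply _ hs,
      ← ofReal_integral_eq_lintegral_ofReal hgint.integrableOn (ae_of_all _ hg0)]
  have hν_Iic : ∀ t, ν (Iic t) = ENNReal.ofReal (G t) := by
    intro t
    rw [hν_meas _ measurableSet_Iic, integral_Iic_eq_integral_Iio, ← hG]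
  have hν_Iio : ∀ t, ν (Iio t) = ENNReal.ofReal (G t) := by
    intro t
    rw [hν_meas _ measurableSet_Iio, ← hG]
  have hνuniv : ν univ = 1 := by
    rw [hν_meas _ MeasurableSet.univ, setIntegral_univ, hg1, ENNReal.ofReal_one]
  haveI : IsProbabilityMeasure ν := ⟨hνuniv⟩
  haveI : IsProbabilityMeasure (ν.map G) :=
    Measure.isProbabilityMeasure_map hGmeas.aemeasurable
  have key : ν.map G = volume.restrict (Ioc 0 1) := by
    refine Measure.ext_of_Iic _ _ fun u => ?_
    rw [Measure.map_apply hGmeas measurableSet_Iic,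
      Measure.restrict_apply measurableSet_Iic]
    rcases lt_or_ge u 0 with hu | hu0
    · have h1 : G ⁻¹' Iic u = ∅ := by
        apply eq_empty_iff_forall_notMem.mpr
        intro x hx
        exact absurd (mem_Iic.mp (mem_preimage.mp hx)) (not_le.mpr (lt_of_lt_of_le hu (hGnonneg x)))
      have h2 : Iic u ∩ Ioc (0:ℝ) 1 = ∅ := by
        apply eq_empty_iff_forall_notMem.mpr
        rintro x ⟨hx1, hx2, _⟩
        exact absurd (lt_of_le_of_lt (le_trans hx2.le hx1) hu) (lt_irrefl 0)
      rw [h1, h2]; simp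
    rcases lt_or_ge u 1 with hu1 | hu1
    · -- main case 0 ≤ u < 1
      have hRHS : Iic u ∩ Ioc (0:ℝ) 1 = Ioc 0 u := by
        ext x
        simp only [mem_inter_iff, mem_Iic, mem_Ioc]
        constructor
        · rintro ⟨h1, h2, h3⟩; exact ⟨h2, h1⟩
        · rintro ⟨h1, h2⟩; exact ⟨h2, h1, le_trans h2 (le_of_lt hu1)⟩
      rw [hRHS, Real.volume_Ioc]
      rw [show u - 0 = u by ring]
      set S := G ⁻¹' Iic u with hS
      by_cases hSe : S = ∅
      · have hu0' : u = 0 := by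
          by_contra hne
          have hupos : 0 < u := lt_of_le_of_ne hu0 (Ne.symm hne)
          have : ∀ᶠ x in atBot, G x < u := hGbot.eventually (eventually_lt_nhds hupos)
          obtain ⟨x, hx⟩ := this.exists
          exact absurd (show x ∈ S from mem_preimage.mpr (mem_Iic.mpr hx.le))
            (eq_empty_iff_forall_notMem.mp hSe x)
        rw [hSe, hu0']; simp
      · have hSne : S.Nonempty := nonempty_iff_ne_empty.mpr hSe
        have hbdd : BddAbove S := by
          have : ∀ᶠ x in atTop, u < G x := hGtop.eventually (eventually_gt_nhds hu1)
          obtain ⟨x0, hx0⟩ := this.exists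
          refine ⟨x0, fun y hy => ?_⟩
          by_contra hlt
          push_neg at hlt
          have : G x0 ≤ G y := hGmono hlt.le
          have : u < G y := lt_of_lt_of_le hx0 this
          exact absurd (mem_Iic.mp (mem_preimage.mp hy)) (not_le.mpr this)
        set t := sSup S with ht
        have hIio : Iio t ⊆ S := by
          intro x hx
          obtain ⟨s, hs, hxs⟩ := exists_lt_of_lt_csSup hSne hx
          exact mem_preimage.mpr (mem_Iic.mpr (le_trans (hGmono hxs.le) (mem_Iic.mp (mem_preimage.mp hs))))
        have hIic : S ⊆ Iic t := fun s hs => le_csSup hbdd hs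
        have hGt_le : G t ≤ u := by
          refine le_of_tendsto ((hGcont.tendsto t).mono_left (nhdsWithin_le_nhds (s := Iio t))) ?_
          filter_upwards [self_mem_nhdsWithin] with x (hx : x ∈ Iio t)
          exact mem_Iic.mp (mem_preimage.mp (hIio hx))
        have hGt_ge : u ≤ G t := by
          refine ge_of_tendsto ((hGcont.tendsto t).mono_left (nhdsWithin_le_nhds (s := Ioi t))) ?_
          filter_upwards [self_mem_nhdsWithin] with x (hx : x ∈ Ioi t)
          by_contra hlt
          push_neg at hlt
          exact absurd (le_csSup hbdd (mem_preimage.mpr (mem_Iic.mpr hlt.le)))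
            (not_le.mpr hx)
        have hGt : G t = u := le_antisymm hGt_le hGt_ge
        have hle1 : ν S ≤ ENNReal.ofReal u := by
          calc ν S ≤ ν (Iic t) := measure_mono hIic
            _ = ENNReal.ofReal u := by rw [hν_Iic, hGt]
        have hle2 : ENNReal.ofReal u ≤ ν S := by
          calc ENNReal.ofReal u = ν (Iio t) := by rw [hν_Iio, hGt]
            _ ≤ ν S := measure_mono hIio
        exact le_antisymm hle1 hle2
    · -- u ≥ 1
      have h1 : G ⁻¹' Iic u = univ := by
        apply eq_univ_iff_forall.mpr
        intro x
        exact mem_preimage.mpr (mem_Iic.mpr (le_trans (hGle1 x) hu1))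
      have h2 : Iic u ∩ Ioc (0:ℝ) 1 = Ioc 0 1 := by
        apply inter_eq_self_of_subset_right
        intro x hx
        exact mem_Iic.mpr (le_trans hx.2 hu1)
      rw [h1, h2, hνuniv, Real.volume_Ioc]
      norm_num
  have step1 : ∫ x, φ (G x) * g x = ∫ x, φ (G x) ∂ν := by
    have hgm : AEMeasurable (fun x => (g x).toNNReal) volume :=
      measurable_real_toNNReal.comp_aemeasurable hgint.aemeasurable
    have h := integral_withDensity_eq_integral_smul₀ hgm (fun u => φ (G u))
    have hcoe : (volume.withDensity fun x => ((g x).toNNReal : ℝ≥0∞)) = ν := by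
      rw [hν]; congr 1
    rw [hcoe] at h
    rw [h]
    congr 1
    funext x
    rw [NNReal.smul_def, smul_eq_mul, Real.coe_toNNReal _ (hg0 x)]
    ring
  have step2 : ∫ x, φ (G x) ∂ν = ∫ u, φ u ∂(ν.map G) :=
    (integral_map hGmeas.aemeasurable hφ.aestronglyMeasurable).symm
  rw [step1, step2, key]

lemma deriv_exp_neg (l : ℝ) (u : ℝ) :
    HasDerivAt (fun u : ℝ => Real.exp (-(l * u))) (Real.exp (-(l * u)) * (-l)) u := by
  have h1 : HasDerivAt (fun u : ℝ => -(l * u)) (-l) u := by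
    simpa using ((hasDerivAt_id' u).const_mul l).fun_neg
  exact h1.exp

lemma int_exp_neg (l : ℝ) (hl : l ≠ 0) :
    ∫ u in (0:ℝ)..1, Real.exp (-(l * u)) = (1 - Real.exp (-l)) / l := by
  have h : ∀ u ∈ uIcc (0:ℝ) 1, HasDerivAt (fun u : ℝ => -(Real.exp (-(l * u)) / l))
      (Real.exp (-(l * u))) u := by
    intro u _
    have := ((deriv_exp_neg l u).div_const l).fun_neg
    convert this using 1 <;> try rfl
    field_simp
  rw [integral_eq_sub_of_hasDerivAt h (Continuous.intervalIntegrable (by fun_prop) 0 1)]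
  field_simp
  simp only [mul_zero, neg_zero, Real.exp_zero]
  ring_nf

lemma int_mul_exp_neg (l : ℝ) (hl : l ≠ 0) :
    ∫ u in (0:ℝ)..1, u * Real.exp (-(l * u)) =
      -Real.exp (-l) / l + (1 - Real.exp (-l)) / l ^ 2 := by
  have h : ∀ u ∈ uIcc (0:ℝ) 1, HasDerivAt
      (fun u : ℝ => -(u / l) * Real.exp (-(l * u)) - Real.exp (-(l * u)) / l ^ 2)
      (u * Real.exp (-(l * u))) u := by
    intro u _
    have h1 : HasDerivAt (fun u : ℝ => -(u / l)) (-(1 / l)) u := by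
      simpa using ((hasDerivAt_id' u).div_const l).fun_neg
    have h2 := h1.mul (deriv_exp_neg l u)
    have h3 := (deriv_exp_neg l u).div_const (l ^ 2)
    have := h2.fun_sub h3
    convert this using 1 <;> try rfl
    field_simp
    ring
  rw [integral_eq_sub_of_hasDerivAt h (Continuous.intervalIntegrable (by fun_prop) 0 1)]
  field_simp
  simp only [mul_zero, neg_zero, Real.exp_zero]
  ring_nf

lemma one_sub_exp_neg_pos {l : ℝ} (hl : 0 < l) : 0 < 1 - Real.exp (-l) := by
  have : Real.exp (-l) < 1 := Real.exp_lt_one_iff.mpr (by linarith)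
  linarith

lemma exp_sub_one_pos {l : ℝ} (hl : 0 < l) : 0 < Real.exp l - 1 := by
  have : 1 < Real.exp l := Real.one_lt_exp_iff.mpr hl
  linarith

lemma c_pos {l : ℝ} (hl : l ≠ 0) : 0 < l / (1 - Real.exp (-l)) := by
  rcases lt_or_gt_of_ne hl with h | h
  · have h1 : 1 < Real.exp (-l) := Real.one_lt_exp_iff.mpr (by linarith)
    exact div_pos_of_neg_of_neg h (by linarith)
  · exact div_pos h (one_sub_exp_neg_pos h)

lemma ratio_pos {l : ℝ} (hl : l ≠ 0) : 0 < l / (Real.exp l - 1) := by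
  rcases lt_or_gt_of_ne hl with h | h
  · have h1 : Real.exp l < 1 := Real.exp_lt_one_iff.mpr h
    exact div_pos_of_neg_of_neg h (by linarith)
  · exact div_pos h (exp_sub_one_pos h)

-- derivative numerator nonneg: (e^x - 1)^2 - x^2 * e^x ≥ 0
lemma deriv_num_nonneg {x : ℝ} (hx : 0 ≤ x) :
    x ^ 2 * Real.exp x ≤ (Real.exp x - 1) ^ 2 := by
  have h : 0 ≤ x / 2 := by linarith
  have hs : x / 2 ≤ Real.sinh (x / 2) := Real.self_le_sinh_iff.mpr h
  have hsq : (x / 2) ^ 2 ≤ Real.sinh (x / 2) ^ 2 := by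
    apply pow_le_pow_left₀ h hs
  have hkey : (Real.exp x - 1) ^ 2 - x ^ 2 * Real.exp x
      = Real.exp x * ((2 * Real.sinh (x / 2)) ^ 2 - x ^ 2) := by
    rw [Real.sinh_eq]
    have e1 : Real.exp (x / 2) * Real.exp (x / 2) = Real.exp x := by
      rw [← Real.exp_add]; ring_nf
    have e2 : Real.exp (x / 2) * Real.exp (-(x / 2)) = 1 := by
      rw [← Real.exp_add]; simp
    have e3 : Real.exp (-(x / 2)) * Real.exp (-(x / 2)) = Real.exp (-x) := by
      rw [← Real.exp_add]; ring_nf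
    have e4 : Real.exp x * Real.exp (-x) = 1 := by
      rw [← Real.exp_add]; simp
    nlinarith [e1, e2, e3, e4]
  nlinarith [Real.exp_pos x, hsq]

noncomputable def Fent : ℝ → ℝ :=
  fun x => Real.log (x / (1 - Real.exp (-x))) + x / (Real.exp x - 1)

lemma Fent_hasDeriv {x : ℝ} (hx : 0 < x) :
    HasDerivAt Fent
      (((Real.exp x - 1) ^ 2 - x ^ 2 * Real.exp x) / (x * (Real.exp x - 1) ^ 2)) x := by
  have hE : HasDerivAt (fun x : ℝ => 1 - Real.exp (-x)) (Real.exp (-x)) x := by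
    have h1 : HasDerivAt (fun x : ℝ => -x) (-1) x := (hasDerivAt_id x).neg
    have := (hasDerivAt_const x (1 : ℝ)).fun_sub h1.exp
    simpa using this
  have hden : 1 - Real.exp (-x) ≠ 0 := ne_of_gt (one_sub_exp_neg_pos hx)
  have hq : HasDerivAt (fun x : ℝ => x / (1 - Real.exp (-x)))
      ((1 * (1 - Real.exp (-x)) - x * Real.exp (-x)) / (1 - Real.exp (-x)) ^ 2) x :=
    (hasDerivAt_id x).div hE hden
  have hqne : x / (1 - Real.exp (-x)) ≠ 0 := ne_of_gt (div_pos hx (one_sub_exp_neg_pos hx))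
  have hlog := hq.log hqne
  have hE2 : HasDerivAt (fun x : ℝ => Real.exp x - 1) (Real.exp x) x := by
    simpa using (Real.hasDerivAt_exp x).fun_sub (hasDerivAt_const x (1 : ℝ))
  have hden2 : Real.exp x - 1 ≠ 0 := ne_of_gt (exp_sub_one_pos hx)
  have hr : HasDerivAt (fun x : ℝ => x / (Real.exp x - 1))
      ((1 * (Real.exp x - 1) - x * Real.exp x) / (Real.exp x - 1) ^ 2) x :=
    (hasDerivAt_id x).div hE2 hden2
  have hsum := hlog.fun_add hr
  convert hsum using 1 <;> try rfl
  have hee : Real.exp (-x) = (Real.exp x)⁻¹ := Real.exp_neg x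
  have hexne : Real.exp x ≠ 0 := Real.exp_ne_zero x
  rw [hee] at hden ⊢
  field_simp
  ring

lemma Fent_mono : MonotoneOn Fent (Ioi (0:ℝ)) := by
  apply monotoneOn_of_deriv_nonneg (convex_Ioi 0)
  · intro x hx
    exact (Fent_hasDeriv hx).continuousAt.continuousWithinAt
  · intro x hx
    rw [interior_Ioi] at hx
    exact (Fent_hasDeriv hx).differentiableAt.differentiableWithinAt
  · intro x hx
    rw [interior_Ioi] at hx
    rw [(Fent_hasDeriv hx).deriv]
    apply div_nonneg
    · linarith [deriv_num_nonneg hx.le]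
    · exact mul_nonneg hx.le (sq_nonneg _)

lemma Fent_tendsto : Tendsto Fent (𝓝[>] (0:ℝ)) (𝓝 1) := by
  have hE : HasDerivAt (fun x : ℝ => 1 - Real.exp (-x)) 1 0 := by
    have h1 : HasDerivAt (fun x : ℝ => -x) (-1) (0:ℝ) := (hasDerivAt_id (0:ℝ)).neg
    have := (hasDerivAt_const (0:ℝ) (1 : ℝ)).fun_sub h1.exp
    simpa using this
  have hE2 : HasDerivAt (fun x : ℝ => Real.exp x - 1) 1 0 := by
    simpa using (Real.hasDerivAt_exp 0).fun_sub (hasDerivAt_const (0:ℝ) (1 : ℝ))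
  have t1 : Tendsto (fun x : ℝ => x⁻¹ * (1 - Real.exp (-x))) (𝓝[≠] 0) (𝓝 1) := by
    have := hasDerivAt_iff_tendsto_slope.mp hE
    simpa [slope_fun_def, Real.exp_zero] using this
  have t2 : Tendsto (fun x : ℝ => x⁻¹ * (Real.exp x - 1)) (𝓝[≠] 0) (𝓝 1) := by
    have := hasDerivAt_iff_tendsto_slope.mp hE2
    simpa [slope_fun_def, Real.exp_zero] using this
  have t1' : Tendsto (fun x : ℝ => x / (1 - Real.exp (-x))) (𝓝[≠] 0) (𝓝 1) := by
    have := t1.inv₀ one_ne_zero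
    simpa [mul_inv, inv_inv, mul_comm, ← div_eq_mul_inv] using this
  have t2' : Tendsto (fun x : ℝ => x / (Real.exp x - 1)) (𝓝[≠] 0) (𝓝 1) := by
    have := t2.inv₀ one_ne_zero
    simpa [mul_inv, inv_inv, mul_comm, ← div_eq_mul_inv] using this
  have tlog : Tendsto (fun x : ℝ => Real.log (x / (1 - Real.exp (-x)))) (𝓝[≠] 0) (𝓝 0) := by
    have hc : ContinuousAt Real.log 1 := Real.continuousAt_log one_ne_zero
    have := hc.tendsto.comp t1'
    simpa [Function.comp_def, Real.log_one] using this
  have := tlog.add t2'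
  rw [zero_add] at this
  exact this.mono_left (nhdsWithin_mono 0 (fun x hx => (ne_of_gt hx)))

lemma Fent_ge_one {m : ℝ} (hm : 0 < m) : 1 ≤ Fent m := by
  refine le_of_tendsto Fent_tendsto ?_
  filter_upwards [Ioo_mem_nhdsGT_of_mem (show (0:ℝ) ∈ Ico 0 m from ⟨le_refl 0, hm⟩)] with x hx
  exact Fent_mono hx.1 hm hx.2.le

lemma psi_ge_one {l : ℝ} (hl : l ≠ 0) :
    1 ≤ Real.log (l / (1 - Real.exp (-l))) + l / (Real.exp l - 1) := by
  rcases hl.lt_or_gt with h | h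
  · have hm := Fent_ge_one (show 0 < -l by linarith)
    have hden2 : Real.exp l - 1 ≠ 0 := by
      have : Real.exp l < 1 := Real.exp_lt_one_iff.mpr h
      linarith
    have hden2' : Real.exp (-l) - 1 ≠ 0 := by
      have : 1 < Real.exp (-l) := Real.one_lt_exp_iff.mpr (by linarith)
      linarith
    have hee : Real.exp (-l) = (Real.exp l)⁻¹ := Real.exp_neg l
    have hexne : Real.exp l ≠ 0 := Real.exp_ne_zero l
    have hB : 1 - Real.exp l ≠ 0 := by
      have : Real.exp l < 1 := Real.exp_lt_one_iff.mpr h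
      linarith
    have e1 : (-l) / (1 - Real.exp (-(-l))) = (l / (1 - Real.exp (-l))) * Real.exp (-l) := by
      rw [neg_neg, hee]
      field_simp [hB]
      ring
    have e2 : (-l) / (Real.exp (-l) - 1) = l + l / (Real.exp l - 1) := by
      rw [hee]
      field_simp [hden2, hB]
      ring
    have e3 : Fent (-l) = Real.log (l / (1 - Real.exp (-l))) + l / (Real.exp l - 1) := by
      unfold Fent
      rw [e1, e2, Real.log_mul (ne_of_gt (c_pos hl)) (Real.exp_ne_zero (-l)), Real.log_exp]
      ring
    linarith [e3 ▸ hm]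
  · exact Fent_ge_one h

lemma one_sub_exp_neg_ne {l : ℝ} (hl : l ≠ 0) : 1 - Real.exp (-l) ≠ 0 := by
  rcases hl.lt_or_gt with h | h
  · have : 1 < Real.exp (-l) := Real.one_lt_exp_iff.mpr (by linarith)
    linarith
  · exact ne_of_gt (one_sub_exp_neg_pos h)

lemma exp_sub_one_ne {l : ℝ} (hl : l ≠ 0) : Real.exp l - 1 ≠ 0 := by
  rcases hl.lt_or_gt with h | h
  · have : Real.exp l < 1 := Real.exp_lt_one_iff.mpr h
    linarith
  · exact ne_of_gt (exp_sub_one_pos h)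

set_option maxHeartbeats 2000000 in
/-- Maximum entropy characterization of the exp-G density. If `z` is any
probability density, absolutely continuous with respect to the exp-G density `f`, with
`z log z` and `z log f` integrable and satisfying constraints C1 and C2, then
`H_S(z) ≤ H_S(f)`, with equality iff `z = f` a.e. -/
theorem expG_maximum_entropy
    (g : ℝ → ℝ) (hg0 : ∀ x, 0 ≤ g x) (hgint : Integrable g)
    (hg1 : ∫ x, g x = 1)
    (G : ℝ → ℝ) (hG : ∀ x, G x = ∫ t in Iio x, g t)
    (l : ℝ) (hl : l ≠ 0)
    (f : ℝ → ℝ)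
    (hf : ∀ x, f x = l / (1 - Real.exp (-l)) * g x * Real.exp (-(l * G x)))
    (z : ℝ → ℝ) (hz0 : ∀ x, 0 ≤ z x) (hzint : Integrable z) (hz1 : ∫ x, z x = 1)
    (hzac : ∀ᵐ x, f x = 0 → z x = 0)
    (hzlogz : Integrable (fun x => z x * Real.log (z x)))
    (hzlogf : Integrable (fun x => z x * Real.log (f x)))
    (hC1 : ∫ x, z x * Real.log (g x) = ∫ x, f x * Real.log (g x))
    (hC2 : ∫ x, z x * G x = 1 / l - 1 / (Real.exp l - 1)) :
    -∫ x, z x * Real.log (z x) ≤ -∫ x, f x * Real.log (f x) ∧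
    ((-∫ x, z x * Real.log (z x)) = -∫ x, f x * Real.log (f x) ↔
      z =ᵐ[MeasureTheory.volume] f) := by
  set c := l / (1 - Real.exp (-l)) with hcdef
  have hcpos : 0 < c := c_pos hl
  have hne1 : 1 - Real.exp (-l) ≠ 0 := one_sub_exp_neg_ne hl
  have hne2 : Real.exp l - 1 ≠ 0 := exp_sub_one_ne hl
  -- G facts
  have hGmono : Monotone G := by
    intro x y hxy
    rw [hG, hG]
    exact setIntegral_mono_set hgint.integrableOn (ae_of_all _ hg0)
      (HasSubset.Subset.eventuallyLE (Iio_subset_Iio hxy))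
  have hGmeas : Measurable G := hGmono.measurable
  have hGnonneg : ∀ x, 0 ≤ G x := fun x => by
    rw [hG]; exact setIntegral_nonneg measurableSet_Iio fun t _ => hg0 t
  have hGle1 : ∀ x, G x ≤ 1 := fun x => by
    rw [hG, ← hg1]; exact setIntegral_le_integral hgint (ae_of_all _ hg0)
  have hf0 : ∀ x, 0 ≤ f x := fun x => by
    rw [hf]; exact mul_nonneg (mul_nonneg hcpos.le (hg0 x)) (Real.exp_pos _).le
  -- integrability of f
  have hfmeas : AEStronglyMeasurable f volume := by
    have h1 : AEStronglyMeasurable (fun x => c * g x * Real.exp (-(l * G x))) volume := by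
      refine AEStronglyMeasurable.mul ?_ ?_
      · exact aestronglyMeasurable_const.mul hgint.1
      · exact (Real.measurable_exp.comp ((hGmeas.const_mul l).neg)).aestronglyMeasurable
    exact h1.congr (ae_of_all _ fun x => (hf x).symm)
  have hfint : Integrable f := by
    refine Integrable.mono' (hgint.const_mul (c * Real.exp |l|)) hfmeas (ae_of_all _ fun x => ?_)
    rw [Real.norm_eq_abs, abs_of_nonneg (hf0 x), hf]
    have hb : -(l * G x) ≤ |l| := by
      calc -(l * G x) ≤ |l * G x| := neg_le_abs _
        _ = |l| * |G x| := abs_mul _ _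
        _ ≤ |l| * 1 := by
            apply mul_le_mul_of_nonneg_left _ (abs_nonneg l)
            rw [abs_of_nonneg (hGnonneg x)]; exact hGle1 x
        _ = |l| := mul_one _
    calc c * g x * Real.exp (-(l * G x)) ≤ c * g x * Real.exp |l| := by
          apply mul_le_mul_of_nonneg_left (Real.exp_le_exp.mpr hb)
            (mul_nonneg hcpos.le (hg0 x))
      _ = c * Real.exp |l| * g x := by ring
  -- ∫ f = 1
  have hint1 : ∫ x, f x = 1 := by
    have htr := cdf_transform g hg0 hgint hg1 G hG (fun u => c * Real.exp (-(l * u)))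
      (by fun_prop)
    have hfe : (fun x => (fun u => c * Real.exp (-(l * u))) (G x) * g x) = f := by
      funext x; rw [hf]; ring
    rw [hfe] at htr
    rw [htr, ← intervalIntegral.integral_of_le zero_le_one,
      intervalIntegral.integral_const_mul, int_exp_neg l hl]
    rw [hcdef]
    field_simp
  -- ∫ f G = 1/l - 1/(e^l - 1)
  have hintfG : ∫ x, f x * G x = 1 / l - 1 / (Real.exp l - 1) := by
    have htr := cdf_transform g hg0 hgint hg1 G hG
      (fun u => c * (u * Real.exp (-(l * u)))) (by fun_prop)
    have hfe : (fun x => (fun u => c * (u * Real.exp (-(l * u)))) (G x) * g x)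
        = fun x => f x * G x := by
      funext x; rw [hf]; ring
    rw [hfe] at htr
    rw [htr, ← intervalIntegral.integral_of_le zero_le_one,
      intervalIntegral.integral_const_mul, int_mul_exp_neg l hl]
    rw [hcdef]
    have hee : Real.exp (-l) = (Real.exp l)⁻¹ := Real.exp_neg l
    rw [hee] at hne1 ⊢
    have hexne : Real.exp l ≠ 0 := Real.exp_ne_zero l
    field_simp
    ring
  -- integrability of z * G and f * G
  have hzG : Integrable (fun x => z x * G x) := by
    refine Integrable.mono' hzint (hzint.1.mul hGmeas.aestronglyMeasurable)
      (ae_of_all _ fun x => ?_)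
    rw [Real.norm_eq_abs, abs_of_nonneg (mul_nonneg (hz0 x) (hGnonneg x))]
    calc z x * G x ≤ z x * 1 := mul_le_mul_of_nonneg_left (hGle1 x) (hz0 x)
      _ = z x := mul_one _
  have hfG : Integrable (fun x => f x * G x) := by
    refine Integrable.mono' hfint (hfmeas.mul hGmeas.aestronglyMeasurable)
      (ae_of_all _ fun x => ?_)
    rw [Real.norm_eq_abs, abs_of_nonneg (mul_nonneg (hf0 x) (hGnonneg x))]
    calc f x * G x ≤ f x * 1 := mul_le_mul_of_nonneg_left (hGle1 x) (hf0 x)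
      _ = f x := mul_one _
  -- a.e. decomposition of z log f
  have hzdecomp : ∀ᵐ x, z x * Real.log (f x)
      = Real.log c * z x + z x * Real.log (g x) - l * (z x * G x) := by
    filter_upwards [hzac] with x hx
    by_cases hzx : z x = 0
    · simp [hzx]
    · have hfx : f x ≠ 0 := fun h => hzx (hx h)
      have hgx : g x ≠ 0 := fun h0 => hfx (by rw [hf, h0]; ring)
      have hgpos : 0 < g x := lt_of_le_of_ne (hg0 x) (Ne.symm hgx)
      rw [hf, Real.log_mul (by positivity) (Real.exp_ne_zero _),
        Real.log_mul (ne_of_gt hcpos) hgx, Real.log_exp]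
      ring
  -- integrability of z log g
  have hzlogg : Integrable (fun x => z x * Real.log (g x)) := by
    have hi : Integrable (fun x =>
        z x * Real.log (f x) - Real.log c * z x + l * (z x * G x)) :=
      (hzlogf.sub (hzint.const_mul _)).add (hzG.const_mul l)
    refine hi.congr ?_
    filter_upwards [hzdecomp] with x hx
    linarith
  -- value of ∫ z log f
  have hzf_val : ∫ x, z x * Real.log (f x)
      = Real.log c + (∫ x, f x * Real.log (g x)) - l * (1 / l - 1 / (Real.exp l - 1)) := by
    rw [integral_congr_ae hzdecomp]
    have hiA : Integrable (fun x => Real.log c * z x + z x * Real.log (g x)) volume :=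
      (hzint.const_mul _).add hzlogg
    have hiC : Integrable (fun x => l * (z x * G x)) volume := hzG.const_mul l
    rw [integral_sub hiA hiC, integral_add (hzint.const_mul (Real.log c)) hzlogg,
      MeasureTheory.integral_const_mul, MeasureTheory.integral_const_mul, hz1, hC1, hC2]
    ring
  -- Gibbs inequality
  obtain ⟨hgle, hgeq⟩ := gibbs hf0 hfint hint1 hz0 hzint hz1 hzac hzlogz hzlogf
  -- pointwise decomposition of f log f
  have hfdecomp : ∀ x, f x * Real.log (f x)
      = Real.log c * f x + f x * Real.log (g x) - l * (f x * G x) := by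
    intro x
    by_cases hgx : g x = 0
    · rw [hf, hgx]; ring_nf
    · have hgpos : 0 < g x := lt_of_le_of_ne (hg0 x) (Ne.symm hgx)
      rw [hf, Real.log_mul (by positivity) (Real.exp_ne_zero _),
        Real.log_mul (ne_of_gt hcpos) hgx, Real.log_exp]
      ring
  by_cases hflogg : Integrable (fun x => f x * Real.log (g x))
  · -- regular case
    have hflogf : Integrable (fun x => f x * Real.log (f x)) := by
      have : (fun x => f x * Real.log (f x)) = fun x =>
          Real.log c * f x + f x * Real.log (g x) - l * (f x * G x) := funext hfdecomp
      rw [this]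
      exact ((hfint.const_mul _).add hflogg).sub (hfG.const_mul l)
    have hff_val : ∫ x, f x * Real.log (f x)
        = Real.log c + (∫ x, f x * Real.log (g x)) - l * (1 / l - 1 / (Real.exp l - 1)) := by
      have heqf : (fun x => f x * Real.log (f x)) = fun x =>
          Real.log c * f x + f x * Real.log (g x) - l * (f x * G x) := funext hfdecomp
      rw [heqf]
      have hiA : Integrable (fun x => Real.log c * f x + f x * Real.log (g x)) volume :=
        (hfint.const_mul _).add hflogg
      have hiC : Integrable (fun x => l * (f x * G x)) volume := hfG.const_mul l
      rw [integral_sub hiA hiC, integral_add (hfint.const_mul (Real.log c)) hflogg,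
        MeasureTheory.integral_const_mul, MeasureTheory.integral_const_mul, hint1, hintfG]
      ring
    have heq2 : ∫ x, z x * Real.log (f x) = ∫ x, f x * Real.log (f x) := by
      rw [hzf_val, hff_val]
    refine ⟨by linarith, ?_, ?_⟩
    · intro h
      apply hgeq
      rw [heq2]
      linarith
    · intro h
      have : ∫ x, z x * Real.log (z x) = ∫ x, f x * Real.log (f x) :=
        integral_congr_ae (h.mono fun x hx => by simp only [hx])
      linarith
  · -- degenerate case: f log g not integrable
    have hflogf_not : ¬ Integrable (fun x => f x * Real.log (f x)) := by
      intro hcon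
      apply hflogg
      have : (fun x => f x * Real.log (g x)) = fun x =>
          f x * Real.log (f x) - Real.log c * f x + l * (f x * G x) :=
        funext fun x => by have := hfdecomp x; linarith
      rw [this]
      exact (hcon.sub (hfint.const_mul _)).add (hfG.const_mul l)
    have hval0 : ∫ x, f x * Real.log (f x) = 0 := integral_undef hflogf_not
    have hvalg0 : ∫ x, f x * Real.log (g x) = 0 := integral_undef hflogg
    have hznef : ¬ (z =ᵐ[volume] f) := by
      intro h
      exact hflogf_not (hzlogz.congr (h.mono fun x hx => by simp only [hx]))
    have hKpos : 0 ≤ ∫ x, z x * Real.log (f x) := by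
      rw [hzf_val, hvalg0]
      have hpsi := psi_ge_one hl
      have hl1 : l * (1 / l) = 1 := by field_simp
      have : l * (1 / l - 1 / (Real.exp l - 1)) = 1 - l / (Real.exp l - 1) := by
        rw [mul_sub, hl1, mul_one_div]
      rw [this]
      rw [← hcdef] at hpsi
      linarith
    have hstrict : ∫ x, z x * Real.log (f x) < ∫ x, z x * Real.log (z x) :=
      lt_of_le_of_ne hgle (fun hcontra => hznef (hgeq hcontra))
    refine ⟨by rw [hval0]; simp; linarith, ?_, fun h => absurd h hznef⟩
    intro h
    exfalso
    rw [hval0] at h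
    have hz0' : ∫ x, z x * Real.log (z x) = 0 := by linarith
    linarith
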